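/- Bendixson's theorem (special case): Let X be a real symmetric n×n matrix and Y a real skew-symmetric n×n matrix. Then for every (complex) eigenvalue λ of X + Y, the real part of λ satisfies λ_min(X) ≤ Re(λ) ≤ λ_max(X), where λ_min(X) and λ_max(X) are the smallest and largest eigenvalues of X. -/

import Mathlib

open Matrix

/-- Bendixson (real part): for `X` symmetric and `Y` skew-symmetric real matrices, the real
part of every complex eigenvalue of `X + Y` lies between the smallest and the largest
eigenvalue of `X`. -/
theorem stmt3 {n : ℕ} (X Y : Matrix (Fin n) (Fin n) ℝ)
    (hX : X.IsSymm) (hY : Yᵀ = -Y) (a b : ℝ)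
    (ha : (∃ v : Fin n → ℝ, v ≠ 0 ∧ X.mulVec v = a • v) ∧
      ∀ t : ℝ, (∃ v : Fin n → ℝ, v ≠ 0 ∧ X.mulVec v = t • v) → a ≤ t)
    (hb : (∃ v : Fin n → ℝ, v ≠ 0 ∧ X.mulVec v = b • v) ∧
      ∀ t : ℝ, (∃ v : Fin n → ℝ, v ≠ 0 ∧ X.mulVec v = t • v) → t ≤ b)
    (μ : ℂ) (v : Fin n → ℂ) (hv : v ≠ 0)
    (h : ((X + Y).map Complex.ofReal).mulVec v = μ • v) :
    a ≤ μ.re ∧ μ.re ≤ b := by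
  set A : Matrix (Fin n) (Fin n) ℂ := X.map Complex.ofReal with hAdef
  set B : Matrix (Fin n) (Fin n) ℂ := Y.map Complex.ofReal with hBdef
  have hA : A.IsHermitian := by
    ext i j
    simp only [hAdef, conjTranspose_apply, map_apply, RCLike.star_def, Complex.conj_ofReal]
    exact congrArg _ (congrFun (congrFun hX i) j)
  have hBH : Bᴴ = -B := by
    ext i j
    have hYij : Y j i = -Y i j := congrFun (congrFun hY i) j
    simp only [hBdef, conjTranspose_apply, map_apply, RCLike.star_def, Complex.conj_ofReal,
      Matrix.neg_apply, hYij, Complex.ofReal_neg, map_neg]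
  -- every eigenvalue of the Hermitian matrix A lies in [a, b]
  have key : ∀ i, a ≤ hA.eigenvalues i ∧ hA.eigenvalues i ≤ b := by
    intro i
    set t := hA.eigenvalues i with htdef
    have hu := hA.mulVec_eigenvectorBasis i
    have hune : (⇑(hA.eigenvectorBasis i) : Fin n → ℂ) ≠ 0 := by
      have := (hA.eigenvectorBasis).toBasis.ne_zero i
      simpa using fun hc => this (by simpa using hc)
    have hdetC : (A - (t : ℂ) • 1).det = 0 := by
      rw [← Matrix.exists_mulVec_eq_zero_iff]
      refine ⟨_, hune, ?_⟩
      rw [sub_mulVec, hu, smul_mulVec, one_mulVec]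
      ext j; simp [Complex.real_smul, htdef]
    have hmap : (X - t • (1 : Matrix (Fin n) (Fin n) ℝ)).map Complex.ofReal
        = A - (t : ℂ) • 1 := by
      ext i j
      by_cases hij : i = j <;>
        simp [hAdef, map_apply, Matrix.one_apply, Matrix.smul_apply, hij]
    have hdetR : (X - t • (1 : Matrix (Fin n) (Fin n) ℝ)).det = 0 := by
      have h2 : Complex.ofRealHom ((X - t • (1 : Matrix (Fin n) (Fin n) ℝ)).det) = 0 := by
        rw [RingHom.map_det, RingHom.mapMatrix_apply]
        rw [show (X - t • (1 : Matrix (Fin n) (Fin n) ℝ)).map Complex.ofRealHom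
          = A - (t : ℂ) • 1 from hmap, hdetC]
      rw [Complex.ofRealHom_eq_coe] at h2
      exact_mod_cast h2
    obtain ⟨w, hw0, hw⟩ := (Matrix.exists_mulVec_eq_zero_iff).2 hdetR
    have hXw : X.mulVec w = t • w := by
      rw [sub_mulVec, smul_mulVec, one_mulVec, sub_eq_zero] at hw
      exact hw
    exact ⟨ha.2 t ⟨w, hw0, hXw⟩, hb.2 t ⟨w, hw0, hXw⟩⟩
  -- set up the Rayleigh quotient
  have hmapadd : (X + Y).map Complex.ofReal = A + B := by
    ext i j; simp [hAdef, hBdef, map_apply]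
  set c : ℂ := dotProduct (star v) v with hcdef
  have hc_eq : c = ((∑ i, Complex.normSq (v i) : ℝ) : ℂ) := by
    rw [hcdef, dotProduct, Complex.ofReal_sum]
    refine Finset.sum_congr rfl fun i _ => ?_
    simp only [Pi.star_apply, RCLike.star_def]
    exact Complex.normSq_eq_conj_mul_self.symm
  have hc_re : 0 < c.re := by
    rw [hc_eq, Complex.ofReal_re]
    obtain ⟨i, hi⟩ := Function.ne_iff.1 hv
    exact Finset.sum_pos' (fun i _ => Complex.normSq_nonneg _)
      ⟨i, Finset.mem_univ i, by simpa using Complex.normSq_pos.2 hi⟩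
  have hc_im : c.im = 0 := by rw [hc_eq, Complex.ofReal_im]
  set p : ℂ := dotProduct (star v) (A *ᵥ v) with hpdef
  set q : ℂ := dotProduct (star v) (B *ᵥ v) with hqdef
  have hpq : p + q = μ * c := by
    have h' : (A + B) *ᵥ v = μ • v := by rw [← hmapadd]; exact h
    calc p + q = dotProduct (star v) ((A + B) *ᵥ v) := by
          rw [hpdef, hqdef, add_mulVec, dotProduct_add]
      _ = dotProduct (star v) (μ • v) := by rw [h']
      _ = μ * c := by rw [hcdef, dotProduct_smul, smul_eq_mul]
  have hq_re : q.re = 0 := by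
    have hstar : star q = -q := by
      have h1 : star q = dotProduct (star (B *ᵥ v)) v := by
        rw [hqdef, Matrix.star_dotProduct, star_star]
      rw [h1, Matrix.star_mulVec, ← Matrix.dotProduct_mulVec, hBH, neg_mulVec,
        dotProduct_neg, hqdef]
    have := congrArg Complex.re hstar
    simp only [Complex.star_def, Complex.conj_re, Complex.neg_re] at this
    linarith
  have hmu_c : μ.re * c.re = p.re := by
    have := congrArg Complex.re hpq
    simp only [Complex.add_re, Complex.mul_re, hc_im, hq_re, mul_zero, sub_zero,
      add_zero] at this
    linarith
  -- diagonalize: p and c in terms of w := Uᴴ v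
  set U : Matrix (Fin n) (Fin n) ℂ := (hA.eigenvectorUnitary : Matrix (Fin n) (Fin n) ℂ)
    with hUdef
  set w : Fin n → ℂ := star U *ᵥ v with hwdef
  have hsv : star v ᵥ* U = star w := by
    rw [hwdef, Matrix.star_mulVec, Matrix.star_eq_conjTranspose, conjTranspose_conjTranspose]
  have hp_w : p = dotProduct (star w)
      ((diagonal (RCLike.ofReal ∘ hA.eigenvalues) : Matrix (Fin n) (Fin n) ℂ) *ᵥ w) := by
    conv_lhs => rw [hpdef, hA.spectral_theorem, Unitary.conjStarAlgAut_apply]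
    rw [← Matrix.mulVec_mulVec, ← Matrix.mulVec_mulVec, Matrix.dotProduct_mulVec (star v),
      hsv, hwdef]
  have hc_w : c = dotProduct (star w) w := by
    have hUU : U * star U = 1 := by
      simpa [hUdef] using (Matrix.mem_unitaryGroup_iff).1 hA.eigenvectorUnitary.2
    calc c = dotProduct (star v) ((U * star U) *ᵥ v) := by
          rw [hUU, one_mulVec, hcdef]
      _ = dotProduct (star w) w := by
          rw [← Matrix.mulVec_mulVec, Matrix.dotProduct_mulVec (star v), hsv, hwdef]
  have hp_re : p.re = ∑ i, hA.eigenvalues i * Complex.normSq (w i) := by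
    rw [hp_w, dotProduct, Complex.re_sum]
    refine Finset.sum_congr rfl fun i _ => ?_
    simp only [Pi.star_apply, Matrix.mulVec_diagonal, Function.comp_apply, RCLike.star_def]
    rw [show (starRingEnd ℂ) (w i) * ((RCLike.ofReal (hA.eigenvalues i) : ℂ) * w i)
        = (RCLike.ofReal (hA.eigenvalues i) : ℂ) * ((starRingEnd ℂ) (w i) * w i) by ring,
      ← Complex.normSq_eq_conj_mul_self]
    have : (RCLike.ofReal (hA.eigenvalues i) : ℂ) = ((hA.eigenvalues i : ℝ) : ℂ) := rfl
    rw [this, ← Complex.ofReal_mul, Complex.ofReal_re]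
  have hc_re_sum : c.re = ∑ i, Complex.normSq (w i) := by
    rw [hc_w, dotProduct, Complex.re_sum]
    refine Finset.sum_congr rfl fun i _ => ?_
    simp only [Pi.star_apply, RCLike.star_def]
    rw [← Complex.normSq_eq_conj_mul_self, Complex.ofReal_re]
  have hlow : a * c.re ≤ p.re := by
    rw [hp_re, hc_re_sum, Finset.mul_sum]
    exact Finset.sum_le_sum fun i _ =>
      mul_le_mul_of_nonneg_right (key i).1 (Complex.normSq_nonneg _)
  have hhigh : p.re ≤ b * c.re := by
    rw [hp_re, hc_re_sum, Finset.mul_sum]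
    exact Finset.sum_le_sum fun i _ =>
      mul_le_mul_of_nonneg_right (key i).2 (Complex.normSq_nonneg _)
  constructor
  · have h1 := hlow; rw [← hmu_c] at h1
    exact le_of_mul_le_mul_right h1 hc_re
  · have h1 := hhigh; rw [← hmu_c] at h1
    exact le_of_mul_le_mul_right h1 hc_re
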